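/- arXiv:2003.05829 — 2 statements merged into one kernel-verified Lean document; each statement's English description precedes it below -/
import Mathlib

section
/- Let k ≥ 2 be an integer and ΛQ(r) := 2k r^k/(1 + r^{2k}). Then: ∫₀^∞ ΛQ(r)² r dr = 2π / sin(π/k); ∫₀^∞ ΛQ(r)³ r^{k-1} dr = 2k²; and ∫₀^∞ ΛQ(r)³ r^{-k-1} dr = 2k². In particular, with ρ_k := ((8k/π) sin(π/k))^{1/2} and γ_k := (k/2) ρ_k², one has ρ_k² = 16k (∫₀^∞ ΛQ² r dr)^{-1} and the solvability (orthogonality) identities γ_k ∫₀^∞ ΛQ(r)² r dr = 4 ∫₀^∞ ΛQ(r)³ r^{k-1} dr = 4 ∫₀^∞ ΛQ(r)³ r^{-k-1} dr = 8k². -/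
open MeasureTheory Set

noncomputable section

/-- `ΛQ(r) = 2k r^k / (1 + r^{2k})`. -/
def LamQ (k : ℕ) (r : ℝ) : ℝ := 2 * k * r ^ k / (1 + r ^ (2 * k))

/-- `ρ_k = ((8k/π) sin(π/k))^{1/2}`. -/
def rhoK (k : ℕ) : ℝ := Real.sqrt (8 * k / Real.pi * Real.sin (Real.pi / k))

/-- `γ_k = (k/2) ρ_k²`. -/
def gammaK (k : ℕ) : ℝ := (k : ℝ) / 2 * rhoK k ^ 2

open Real

/-- `∫₀^∞ (1+u)⁻³ du = 1/2`. -/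
lemma intE1 : ∫ u in Ioi (0:ℝ), ((1+u)^3)⁻¹ = 1/2 := by
  have hderiv : ∀ x ∈ Ici (0:ℝ),
      HasDerivAt (fun u : ℝ => -(((1+u)^2)⁻¹)/2) (((1+x)^3)⁻¹) x := by
    intro x hx
    have h1 : (1:ℝ) + x ≠ 0 := by simp at hx; positivity
    have hd : HasDerivAt (fun u : ℝ => (1+u)^2) (2*(1+x)) x := by
      have := ((hasDerivAt_id x).const_add (1:ℝ)).pow 2
      refine this.congr_deriv ?_; simp
    have := (hd.inv (pow_ne_zero 2 h1)).neg.div_const 2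
    refine this.congr_deriv ?_
    field_simp
  have htend : Filter.Tendsto (fun u : ℝ => -(((1+u)^2)⁻¹)/2) Filter.atTop (nhds 0) := by
    have t1 : Filter.Tendsto (fun u : ℝ => (1+u)^2) Filter.atTop Filter.atTop :=
      (Filter.tendsto_pow_atTop (two_ne_zero)).comp
        (Filter.tendsto_atTop_add_const_left _ 1 Filter.tendsto_id)
    have := (t1.inv_tendsto_atTop).neg.div_const 2
    simpa using this
  rw [integral_Ioi_of_hasDerivAt_of_nonneg' hderiv
    (fun x hx => by have : (0:ℝ) < x := hx; positivity) htend]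
  norm_num

/-- `∫₀^∞ u (1+u)⁻³ du = 1/2`. -/
lemma intE2 : ∫ u in Ioi (0:ℝ), u / (1+u)^3 = 1/2 := by
  have hderiv : ∀ x ∈ Ici (0:ℝ),
      HasDerivAt (fun u : ℝ => (((1+u)^2)⁻¹)/2 - (1+u)⁻¹) (x/(1+x)^3) x := by
    intro x hx
    have h1 : (1:ℝ) + x ≠ 0 := by simp at hx; positivity
    have hd : HasDerivAt (fun u : ℝ => (1+u)^2) (2*(1+x)) x := by
      have := ((hasDerivAt_id x).const_add (1:ℝ)).pow 2
      refine this.congr_deriv ?_; simp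
    have h2 := ((hd.inv (pow_ne_zero 2 h1)).div_const 2).sub
      (((hasDerivAt_id x).const_add (1:ℝ)).inv h1)
    refine h2.congr_deriv ?_
    simp only [id_eq]
    field_simp
    ring
  have htend : Filter.Tendsto (fun u : ℝ => (((1+u)^2)⁻¹)/2 - (1+u)⁻¹)
      Filter.atTop (nhds 0) := by
    have t1 : Filter.Tendsto (fun u : ℝ => (1+u)^2) Filter.atTop Filter.atTop :=
      (Filter.tendsto_pow_atTop (two_ne_zero)).comp
        (Filter.tendsto_atTop_add_const_left _ 1 Filter.tendsto_id)
    have t2 : Filter.Tendsto (fun u : ℝ => (1+u)) Filter.atTop Filter.atTop :=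
      Filter.tendsto_atTop_add_const_left _ 1 Filter.tendsto_id
    have := ((t1.inv_tendsto_atTop).div_const 2).sub (t2.inv_tendsto_atTop)
    simpa using this
  rw [integral_Ioi_of_hasDerivAt_of_nonneg' hderiv (fun x hx => by
    have : (0:ℝ) < x := hx
    positivity) htend]
  norm_num

/-- The Euler Beta integral `B(1+a, 1-a) = aπ/sin(πa)` for `0 < a < 1`. -/
lemma beta_aux {a : ℝ} (ha : 0 < a) (ha1 : a < 1) :
    ∫ x in Ioo (0:ℝ) 1, x ^ a * (1 - x) ^ (-a) = a * (π / Real.sin (π * a)) := by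
  have key : Complex.betaIntegral (1 + a) (1 - a)
      = Complex.ofReal (∫ x in (0:ℝ)..1, x ^ a * (1 - x) ^ (-a)) := by
    rw [← intervalIntegral.integral_ofReal]
    unfold Complex.betaIntegral
    refine intervalIntegral.integral_congr fun x hx => ?_
    rw [uIcc_of_le zero_le_one] at hx
    have h1 : (0:ℝ) ≤ 1 - x := by linarith [hx.2]
    rw [Complex.ofReal_mul, Complex.ofReal_cpow hx.1, Complex.ofReal_cpow h1]
    push_cast
    norm_num
  have hG : Complex.Gamma (1 + a) * Complex.Gamma (1 - a)
      = Complex.betaIntegral (1 + a) (1 - a) := by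
    have h2 := Complex.Gamma_mul_Gamma_eq_betaIntegral (s := 1 + (a:ℂ)) (t := 1 - a)
      (by simp; linarith) (by simp [Complex.sub_re]; linarith)
    have h3 : (1 + (a:ℂ)) + (1 - a) = 2 := by ring
    have hG1 : Complex.Gamma 2 = 1 := by
      rw [show (2:ℂ) = 1 + 1 by norm_num, Complex.Gamma_add_one _ one_ne_zero,
        Complex.Gamma_one, mul_one]
    rw [h3, hG1, one_mul] at h2
    exact h2
  have ha0 : (a:ℂ) ≠ 0 := by exact_mod_cast ha.ne'
  have hG2 : Complex.Gamma (1 + (a:ℂ)) = a * Complex.Gamma a := by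
    rw [add_comm]; exact Complex.Gamma_add_one _ ha0
  have hrefl := Complex.Gamma_mul_Gamma_one_sub (a:ℂ)
  have : Complex.ofReal (∫ x in (0:ℝ)..1, x ^ a * (1 - x) ^ (-a))
      = Complex.ofReal (a * (π / Real.sin (π * a))) := by
    rw [← key, ← hG, hG2, mul_assoc, hrefl]
    push_cast [Complex.ofReal_sin]
    ring
  have h4 := Complex.ofReal_injective this
  rw [intervalIntegral.integral_of_le zero_le_one, integral_Ioc_eq_integral_Ioo] at h4
  exact h4

/-- `∫₀^∞ uᵃ/(1+u)² du = aπ/sin(πa)` for `0 < a < 1`. -/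
lemma intA {a : ℝ} (ha : 0 < a) (ha1 : a < 1) :
    ∫ u in Ioi (0:ℝ), u ^ a / (1 + u) ^ 2 = a * (π / Real.sin (π * a)) := by
  have himg : (fun x : ℝ => x / (1 - x)) '' Ioo (0:ℝ) 1 = Ioi 0 := by
    ext u
    constructor
    · rintro ⟨x, ⟨hx0, hx1⟩, rfl⟩
      exact div_pos hx0 (by linarith)
    · intro hu
      have hu' : (0:ℝ) < u := hu
      have h1u : (0:ℝ) < 1 + u := by linarith
      refine ⟨u / (1 + u), ⟨div_pos hu' h1u, by rw [div_lt_one h1u]; linarith⟩, ?_⟩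
      field_simp
      ring
  have hderiv : ∀ x ∈ Ioo (0:ℝ) 1, HasDerivWithinAt (fun x : ℝ => x / (1 - x))
      (((1 - x) ^ 2)⁻¹) (Ioo (0:ℝ) 1) x := by
    intro x hx
    have h1 : (1:ℝ) - x ≠ 0 := by have := hx.2; intro h; simp at *; linarith
    have hd := (hasDerivAt_id x).div ((hasDerivAt_id x).const_sub 1) h1
    refine HasDerivAt.hasDerivWithinAt ?_
    refine hd.congr_deriv ?_
    simp only [id_eq]
    field_simp
    ring
  have hinj : InjOn (fun x : ℝ => x / (1 - x)) (Ioo (0:ℝ) 1) := by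
    intro x hx y hy h
    have h1 : (1:ℝ) - x ≠ 0 := by have := hx.2; intro hh; linarith [hx.2, (by linarith : x = 1)]
    have h2 : (1:ℝ) - y ≠ 0 := by intro hh; linarith [hy.2, (by linarith : y = 1)]
    field_simp at h
    nlinarith [h]
  have key := integral_image_eq_integral_abs_deriv_smul measurableSet_Ioo hderiv hinj
    (fun u : ℝ => u ^ a / (1 + u) ^ 2)
  rw [himg] at key
  rw [key, ← beta_aux ha ha1]
  refine setIntegral_congr_fun measurableSet_Ioo fun x hx => ?_
  obtain ⟨hx0, hx1⟩ := hx
  have h1 : (0:ℝ) < 1 - x := by linarith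
  have hfx : (1:ℝ) + x / (1 - x) = (1 - x)⁻¹ := by field_simp; ring
  have hxr : (0:ℝ) < x ^ a := rpow_pos_of_pos hx0 a
  have h1r : (0:ℝ) < (1 - x) ^ a := rpow_pos_of_pos h1 a
  simp only [smul_eq_mul, hfx]
  rw [abs_of_pos (by positivity), div_rpow hx0.le h1.le, rpow_neg h1.le]
  rw [inv_pow]
  field_simp

/-- First integral: `∫₀^∞ ΛQ² r dr = 2π / sin(π/k)`. -/
lemma L1 {k : ℕ} (hk : 2 ≤ k) :
    ∫ r in Ioi (0:ℝ), LamQ k r ^ 2 * r = 2 * π / Real.sin (π / k) := by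
  obtain ⟨j, rfl⟩ : ∃ j, k = j + 2 := ⟨k - 2, by omega⟩
  have hK : (0:ℝ) < (j:ℝ) + 2 := by positivity
  have ha : (0:ℝ) < 1/((j:ℝ)+2) := by positivity
  have ha1 : 1/((j:ℝ)+2) < 1 := by rw [div_lt_one hK]; linarith
  have hp : (0:ℝ) < ((2*j+4 : ℕ) : ℝ) := by positivity
  have key := integral_comp_rpow_Ioi_of_pos
    (g := fun u : ℝ => (2*((j:ℝ)+2)) * (u ^ ((1:ℝ)/((j:ℝ)+2)) / (1+u)^2)) hp
  rw [integral_const_mul, intA ha ha1] at key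
  have hc : ∫ x in Ioi (0:ℝ), (((2*j+4:ℕ):ℝ) * x ^ (((2*j+4:ℕ):ℝ) - 1)) •
      ((2*((j:ℝ)+2)) * ((x ^ (((2*j+4:ℕ):ℝ))) ^ ((1:ℝ)/((j:ℝ)+2)) / (1 + x ^ (((2*j+4:ℕ):ℝ)))^2))
      = ∫ r in Ioi (0:ℝ), LamQ (j+2) r ^ 2 * r := by
    refine setIntegral_congr_fun measurableSet_Ioi fun x hx => ?_
    have hx0 : (0:ℝ) < x := hx
    have e1 : x ^ (((2*j+4:ℕ):ℝ)) = x ^ (2*j+4 : ℕ) := rpow_natCast x _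
    have e2 : x ^ (((2*j+4:ℕ):ℝ) - 1) = x ^ (2*j+3 : ℕ) := by
      rw [show ((2*j+4:ℕ):ℝ) - 1 = ((2*j+3:ℕ):ℝ) by push_cast; ring, rpow_natCast]
    have e3 : (x ^ (((2*j+4:ℕ):ℝ))) ^ ((1:ℝ)/((j:ℝ)+2)) = x ^ (2:ℕ) := by
      rw [← rpow_mul hx0.le]
      rw [show ((2*j+4:ℕ):ℝ) * ((1:ℝ)/((j:ℝ)+2)) = ((2:ℕ):ℝ) by push_cast; field_simp; ring]
      exact rpow_natCast x 2
    rw [smul_eq_mul, e3]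
    simp only [e1, e2, LamQ]
    have hden' : (0:ℝ) < 1 + x ^ (2*j+4) := by positivity
    rw [show 2*(j+2) = 2*j+4 from by ring]
    push_cast
    field_simp
    ring
  rw [← hc]
  beta_reduce at key
  rw [key]
  have hcast : ((j+2 : ℕ):ℝ) = (j:ℝ) + 2 := by push_cast; ring
  rw [hcast, mul_one_div]
  have hlt : π / ((j:ℝ)+2) < π := div_lt_self pi_pos (by linarith)
  have hS : Real.sin (π / ((j:ℝ)+2)) ≠ 0 :=
    ne_of_gt (sin_pos_of_pos_of_lt_pi (by positivity) hlt)
  field_simp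

/-- Second integral: `∫₀^∞ ΛQ³ r^{k-1} dr = 2k²`. -/
lemma L2 {k : ℕ} (hk : 2 ≤ k) :
    ∫ r in Ioi (0:ℝ), LamQ k r ^ 3 * r ^ (k - 1) = 2 * (k:ℝ) ^ 2 := by
  obtain ⟨j, rfl⟩ : ∃ j, k = j + 2 := ⟨k - 2, by omega⟩
  have hp : (0:ℝ) < ((2*j+4 : ℕ) : ℝ) := by positivity
  have key := integral_comp_rpow_Ioi_of_pos
    (g := fun u : ℝ => (4*((j:ℝ)+2)^2) * (u / (1+u)^3)) hp
  rw [integral_const_mul, intE2] at key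
  have hc : ∫ x in Ioi (0:ℝ), (((2*j+4:ℕ):ℝ) * x ^ (((2*j+4:ℕ):ℝ) - 1)) •
      ((4*((j:ℝ)+2)^2) * (x ^ (((2*j+4:ℕ):ℝ)) / (1 + x ^ (((2*j+4:ℕ):ℝ)))^3))
      = ∫ r in Ioi (0:ℝ), LamQ (j+2) r ^ 3 * r ^ ((j+2) - 1) := by
    refine setIntegral_congr_fun measurableSet_Ioi fun x hx => ?_
    have hx0 : (0:ℝ) < x := hx
    have e1 : x ^ (((2*j+4:ℕ):ℝ)) = x ^ (2*j+4 : ℕ) := rpow_natCast x _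
    have e2 : x ^ (((2*j+4:ℕ):ℝ) - 1) = x ^ (2*j+3 : ℕ) := by
      rw [show ((2*j+4:ℕ):ℝ) - 1 = ((2*j+3:ℕ):ℝ) by push_cast; ring, rpow_natCast]
    simp only [smul_eq_mul, e1, e2, LamQ]
    have hden' : (0:ℝ) < 1 + x ^ (2*j+4) := by positivity
    rw [show 2*(j+2) = 2*j+4 from by ring, show (j+2)-1 = j+1 from rfl]
    push_cast
    field_simp
    ring
  rw [← hc]
  beta_reduce at key
  rw [key]
  push_cast
  ring

/-- Third integral: `∫₀^∞ ΛQ³ r^{-k-1} dr = 2k²`. -/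
lemma L3 {k : ℕ} (hk : 2 ≤ k) :
    ∫ r in Ioi (0:ℝ), LamQ k r ^ 3 / r ^ (k + 1) = 2 * (k:ℝ) ^ 2 := by
  obtain ⟨j, rfl⟩ : ∃ j, k = j + 2 := ⟨k - 2, by omega⟩
  have hp : (0:ℝ) < ((2*j+4 : ℕ) : ℝ) := by positivity
  have key := integral_comp_rpow_Ioi_of_pos
    (g := fun u : ℝ => (4*((j:ℝ)+2)^2) * ((1+u)^3)⁻¹) hp
  rw [integral_const_mul, intE1] at key
  have hc : ∫ x in Ioi (0:ℝ), (((2*j+4:ℕ):ℝ) * x ^ (((2*j+4:ℕ):ℝ) - 1)) •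
      ((4*((j:ℝ)+2)^2) * ((1 + x ^ (((2*j+4:ℕ):ℝ)))^3)⁻¹)
      = ∫ r in Ioi (0:ℝ), LamQ (j+2) r ^ 3 / r ^ ((j+2) + 1) := by
    refine setIntegral_congr_fun measurableSet_Ioi fun x hx => ?_
    have hx0 : (0:ℝ) < x := hx
    have e1 : x ^ (((2*j+4:ℕ):ℝ)) = x ^ (2*j+4 : ℕ) := rpow_natCast x _
    have e2 : x ^ (((2*j+4:ℕ):ℝ) - 1) = x ^ (2*j+3 : ℕ) := by
      rw [show ((2*j+4:ℕ):ℝ) - 1 = ((2*j+3:ℕ):ℝ) by push_cast; ring, rpow_natCast]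
    simp only [smul_eq_mul, e1, e2, LamQ]
    have hden' : (0:ℝ) < 1 + x ^ (2*j+4) := by positivity
    rw [show 2*(j+2) = 2*j+4 from by ring]
    push_cast
    field_simp
    ring
  rw [← hc]
  beta_reduce at key
  rw [key]
  push_cast
  ring

/-- the explicit integrals of `ΛQ` and the resulting identities
for `ρ_k` and `γ_k`. -/
theorem stmt16 (k : ℕ) (hk : 2 ≤ k) :
    (∫ r in Ioi (0 : ℝ), LamQ k r ^ 2 * r) = 2 * Real.pi / Real.sin (Real.pi / k) ∧
    (∫ r in Ioi (0 : ℝ), LamQ k r ^ 3 * r ^ (k - 1)) = 2 * (k : ℝ) ^ 2 ∧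
    (∫ r in Ioi (0 : ℝ), LamQ k r ^ 3 / r ^ (k + 1)) = 2 * (k : ℝ) ^ 2 ∧
    rhoK k ^ 2 = 16 * k * (∫ r in Ioi (0 : ℝ), LamQ k r ^ 2 * r)⁻¹ ∧
    gammaK k * (∫ r in Ioi (0 : ℝ), LamQ k r ^ 2 * r) = 8 * (k : ℝ) ^ 2 ∧
    4 * (∫ r in Ioi (0 : ℝ), LamQ k r ^ 3 * r ^ (k - 1)) = 8 * (k : ℝ) ^ 2 ∧
    4 * (∫ r in Ioi (0 : ℝ), LamQ k r ^ 3 / r ^ (k + 1)) = 8 * (k : ℝ) ^ 2 := by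
  have h1 := L1 hk
  have h2 := L2 hk
  have h3 := L3 hk
  have hk0 : (0:ℝ) < (k:ℝ) := by exact_mod_cast (by omega : 0 < k)
  have hk1 : (1:ℝ) < (k:ℝ) := by exact_mod_cast (by omega : 1 < k)
  have hlt : π / (k:ℝ) < π := div_lt_self pi_pos hk1
  have hS : 0 < Real.sin (π / k) :=
    sin_pos_of_pos_of_lt_pi (div_pos pi_pos hk0) hlt
  have hrho : rhoK k ^ 2 = 8 * k / π * Real.sin (π / k) :=
    Real.sq_sqrt (by positivity)
  refine ⟨h1, h2, h3, ?_, ?_, ?_, ?_⟩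
  · rw [hrho, h1]
    field_simp
    ring
  · rw [h1]
    unfold gammaK
    rw [hrho]
    field_simp
  · rw [h2]; ring
  · rw [h3]; ring

end
end

section
/- Let X, Y, Z be real Banach spaces, x₀ ∈ X, y₀ ∈ Y, and δ₁, δ₂ > 0. Let G be a map from the product of closed balls B̄(x₀, δ₁) × B̄(y₀, δ₂) to Z which is continuous, and such that for each fixed x ∈ B̄(x₀, δ₁) the map y ↦ G(x, y) is continuously Fréchet differentiable on B̄(y₀, δ₂) with partial derivative D_yG(x, y) ∈ L(Y, Z). Suppose G(x₀, y₀) = 0 and that L₀ := D_yG(x₀, y₀) has a bounded inverse L₀⁻¹ ∈ L(Z, Y). Suppose moreover that for all x ∈ B̄(x₀, δ₁) and y ∈ B̄(y₀, δ₂): ‖L₀ - D_yG(x, y)‖_{L(Y,Z)} ≤ 1/(3 ‖L₀⁻¹‖_{L(Z,Y)}) and ‖G(x, y₀)‖_Z ≤ δ₂/(3 ‖L₀⁻¹‖_{L(Z,Y)}). Then there exists a continuous function ς : B̄(x₀, δ₁) → B̄(y₀, δ₂) such that for every x ∈ B̄(x₀, δ₁), y = ς(x) is the unique solution of G(x, y)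 = 0 with y ∈ B̄(y₀, δ₂). -/
open Metric
open scoped NNReal

/-- a quantitative implicit function theorem with uniform control
on the size of the ball on which the implicit function is defined. -/
theorem stmt18 {X Y Z : Type*}
    [NormedAddCommGroup X] [NormedSpace ℝ X] [CompleteSpace X]
    [NormedAddCommGroup Y] [NormedSpace ℝ Y] [CompleteSpace Y]
    [NormedAddCommGroup Z] [NormedSpace ℝ Z] [CompleteSpace Z]
    (x₀ : X) (y₀ : Y) (δ₁ δ₂ : ℝ) (hδ₁ : 0 < δ₁) (hδ₂ : 0 < δ₂)
    (G : X → Y → Z) (DG : X → Y → (Y →L[ℝ] Z))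
    (hGcont : ContinuousOn (fun p : X × Y => G p.1 p.2)
      (closedBall x₀ δ₁ ×ˢ closedBall y₀ δ₂))
    (hderiv : ∀ x ∈ closedBall x₀ δ₁, ∀ y ∈ closedBall y₀ δ₂,
      HasFDerivWithinAt (G x) (DG x y) (closedBall y₀ δ₂) y)
    (hDGcont : ∀ x ∈ closedBall x₀ δ₁, ContinuousOn (DG x) (closedBall y₀ δ₂))
    (hG0 : G x₀ y₀ = 0)
    (L₀ : Y ≃L[ℝ] Z) (hL₀ : (L₀ : Y →L[ℝ] Z) = DG x₀ y₀)
    (hbound1 : ∀ x ∈ closedBall x₀ δ₁, ∀ y ∈ closedBall y₀ δ₂,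
      ‖(L₀ : Y →L[ℝ] Z) - DG x y‖ ≤ 1 / (3 * ‖(L₀.symm : Z →L[ℝ] Y)‖))
    (hbound2 : ∀ x ∈ closedBall x₀ δ₁,
      ‖G x y₀‖ ≤ δ₂ / (3 * ‖(L₀.symm : Z →L[ℝ] Y)‖)) :
    ∃ ς : X → Y, ContinuousOn ς (closedBall x₀ δ₁) ∧
      ∀ x ∈ closedBall x₀ δ₁,
        ς x ∈ closedBall y₀ δ₂ ∧ G x (ς x) = 0 ∧
        ∀ y ∈ closedBall y₀ δ₂, G x y = 0 → y = ς x := by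
  classical
  set c : ℝ := ‖(L₀.symm : Z →L[ℝ] Y)‖ with hc_def
  by_cases hc : c = 0
  · -- degenerate case: Y and Z are trivial
    have hZ : ∀ z : Z, z = 0 := by
      intro z
      have h1 : (L₀.symm : Z →L[ℝ] Y) z = 0 := by
        have := (L₀.symm : Z →L[ℝ] Y).le_opNorm z
        rw [← hc_def, hc, zero_mul] at this
        exact norm_le_zero_iff.mp this
      have h2 := L₀.apply_symm_apply z
      rw [show L₀.symm z = 0 from h1] at h2
      simpa using h2.symm
    have hY : ∀ w : Y, w = 0 := by
      intro w
      have h2 := L₀.symm_apply_apply w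
      rw [hZ (L₀ w)] at h2
      simpa using h2.symm
    refine ⟨fun _ => y₀, continuousOn_const, fun x hx =>
      ⟨mem_closedBall_self hδ₂.le, hZ _, fun y hy _ => ?_⟩⟩
    rw [hY y, hY y₀]
  · have hc0 : 0 < c := lt_of_le_of_ne (norm_nonneg _) (Ne.symm hc)
    set s₁ := closedBall x₀ δ₁ with hs₁
    set s₂ := closedBall y₀ δ₂ with hs₂
    set Φ : X → Y → Y := fun x y => y - L₀.symm (G x y) with hΦ
    -- contraction estimate
    have key1 : ∀ x ∈ s₁, ∀ y ∈ s₂, ∀ y' ∈ s₂,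
        ‖Φ x y - Φ x y'‖ ≤ (1 / 3) * ‖y - y'‖ := by
      intro x hx y hy y' hy'
      have hmv : ‖(L₀ y - G x y) - (L₀ y' - G x y')‖ ≤ (1 / (3 * c)) * ‖y - y'‖ := by
        have := Convex.norm_image_sub_le_of_norm_hasFDerivWithin_le
          (f := fun w => L₀ w - G x w)
          (f' := fun w => (L₀ : Y →L[ℝ] Z) - DG x w) (C := 1 / (3 * c))
          (fun w hw => ((L₀ : Y →L[ℝ] Z).hasFDerivAt.hasFDerivWithinAt).sub
            (hderiv x hx w hw))
          (fun w hw => hbound1 x hx w hw) (convex_closedBall y₀ δ₂) hy' hy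
        simpa using this
      have heq : Φ x y - Φ x y' = L₀.symm ((L₀ y - G x y) - (L₀ y' - G x y')) := by
        simp only [hΦ, map_sub, ContinuousLinearEquiv.symm_apply_apply]
      calc ‖Φ x y - Φ x y'‖ = ‖(L₀.symm : Z →L[ℝ] Y) ((L₀ y - G x y) - (L₀ y' - G x y'))‖ := by
            rw [heq]; rfl
        _ ≤ c * ‖(L₀ y - G x y) - (L₀ y' - G x y')‖ :=
            (L₀.symm : Z →L[ℝ] Y).le_opNorm _
        _ ≤ c * ((1 / (3 * c)) * ‖y - y'‖) := by
            exact mul_le_mul_of_nonneg_left hmv hc0.le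
        _ = (1 / 3) * ‖y - y'‖ := by field_simp
    -- Φ x maps s₂ into itself
    have key2 : ∀ x ∈ s₁, Set.MapsTo (Φ x) s₂ s₂ := by
      intro x hx y hy
      have h1 : ‖Φ x y - Φ x y₀‖ ≤ (1 / 3) * ‖y - y₀‖ :=
        key1 x hx y hy y₀ (mem_closedBall_self hδ₂.le)
      have h2 : ‖Φ x y₀ - y₀‖ ≤ δ₂ / 3 := by
        have : Φ x y₀ - y₀ = -(L₀.symm : Z →L[ℝ] Y) (G x y₀) := by
          simp [hΦ]
        rw [this, norm_neg]
        calc ‖(L₀.symm : Z →L[ℝ] Y) (G x y₀)‖ ≤ c * ‖G x y₀‖ :=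
              (L₀.symm : Z →L[ℝ] Y).le_opNorm _
          _ ≤ c * (δ₂ / (3 * c)) := mul_le_mul_of_nonneg_left (hbound2 x hx) hc0.le
          _ = δ₂ / 3 := by field_simp
      have h3 : ‖y - y₀‖ ≤ δ₂ := by
        rw [← dist_eq_norm]; exact mem_closedBall.mp hy
      have : ‖Φ x y - y₀‖ ≤ δ₂ := by
        calc ‖Φ x y - y₀‖ ≤ ‖Φ x y - Φ x y₀‖ + ‖Φ x y₀ - y₀‖ := norm_sub_le_norm_sub_add_norm_sub _ _ _
          _ ≤ (1 / 3) * δ₂ + δ₂ / 3 := by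
              have := h1.trans (by nlinarith : (1 / 3 : ℝ) * ‖y - y₀‖ ≤ (1 / 3) * δ₂)
              linarith
          _ ≤ δ₂ := by linarith
      show Φ x y ∈ closedBall y₀ δ₂
      rw [mem_closedBall, dist_eq_norm]
      exact this
    -- fixed points are exactly zeros of G
    have hfix_iff : ∀ x y, Function.IsFixedPt (Φ x) y ↔ G x y = 0 := by
      intro x y
      constructor
      · intro h
        have : L₀.symm (G x y) = 0 := by
          have := h
          simp only [hΦ, Function.IsFixedPt, sub_eq_self] at this
          exact this
        have := congrArg L₀ this
        simpa using this
      · intro h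
        simp [hΦ, Function.IsFixedPt, h]
    -- existence of fixed points
    have hex : ∀ x ∈ s₁, ∃ y, y ∈ s₂ ∧ G x y = 0 := by
      intro x hx
      have hlip : LipschitzOnWith (1/3 : ℝ≥0) (Φ x) s₂ :=
        LipschitzOnWith.of_dist_le_mul fun y hy y' hy' => by
          rw [dist_eq_norm, dist_eq_norm]
          have := key1 x hx y hy y' hy'
          have hcoe : ((1/3 : ℝ≥0) : ℝ) = 1 / 3 := by push_cast; norm_num
          rw [hcoe]
          exact this
      have hcontr : ContractingWith (1/3 : ℝ≥0) ((key2 x hx).restrict (Φ x) s₂ s₂) :=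
        ⟨by rw [← NNReal.coe_lt_coe]; norm_num, hlip.mapsToRestrict (key2 x hx)⟩
      obtain ⟨y, hys, hyfix, -⟩ := hcontr.exists_fixedPoint'
        isClosed_closedBall.isComplete (key2 x hx)
        (mem_closedBall_self hδ₂.le) (edist_ne_top _ _)
      exact ⟨y, hys, (hfix_iff x y).mp hyfix⟩
    choose! ς hς1 hς2 using hex
    -- uniqueness of zeros
    have huniq : ∀ x ∈ s₁, ∀ y ∈ s₂, G x y = 0 → y = ς x := by
      intro x hx y hy hGy
      have h1 : Φ x y = y := (hfix_iff x y).mpr hGy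
      have h2 : Φ x (ς x) = ς x := (hfix_iff x (ς x)).mpr (hς2 x hx)
      have := key1 x hx y hy (ς x) (hς1 x hx)
      rw [h1, h2] at this
      have : ‖y - ς x‖ ≤ 0 := by linarith
      have := norm_le_zero_iff.mp this
      exact sub_eq_zero.mp this
    -- key continuity estimate
    have hest : ∀ x' ∈ s₁, ∀ x ∈ s₁,
        dist (ς x) (ς x') ≤ (3 / 2) * c * ‖G x (ς x') - G x' (ς x')‖ := by
      intro x' hx' x hx
      have h1 : Φ x (ς x) = ς x := (hfix_iff x (ς x)).mpr (hς2 x hx)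
      have h2 : Φ x' (ς x') = ς x' := (hfix_iff x' (ς x')).mpr (hς2 x' hx')
      have hdiff : Φ x (ς x') - Φ x' (ς x') =
          (L₀.symm : Z →L[ℝ] Y) (G x' (ς x') - G x (ς x')) := by
        simp only [hΦ, map_sub, ContinuousLinearEquiv.coe_coe]
        abel
      have hA : ‖Φ x (ς x') - Φ x' (ς x')‖ ≤ c * ‖G x (ς x') - G x' (ς x')‖ := by
        rw [hdiff]
        calc ‖(L₀.symm : Z →L[ℝ] Y) (G x' (ς x') - G x (ς x'))‖
            ≤ c * ‖G x' (ς x') - G x (ς x')‖ := (L₀.symm : Z →L[ℝ] Y).le_opNorm _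
          _ = c * ‖G x (ς x') - G x' (ς x')‖ := by rw [norm_sub_rev]
      have hB : ‖Φ x (ς x) - Φ x (ς x')‖ ≤ (1 / 3) * ‖ς x - ς x'‖ :=
        key1 x hx (ς x) (hς1 x hx) (ς x') (hς1 x' hx')
      have hC : ‖ς x - ς x'‖ ≤ ‖Φ x (ς x) - Φ x (ς x')‖ + ‖Φ x (ς x') - Φ x' (ς x')‖ := by
        calc ‖ς x - ς x'‖ = ‖Φ x (ς x) - Φ x' (ς x')‖ := by rw [h1, h2]
          _ ≤ _ := norm_sub_le_norm_sub_add_norm_sub _ _ _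
      rw [dist_eq_norm]
      nlinarith [norm_nonneg (ς x - ς x'), norm_nonneg (G x (ς x') - G x' (ς x'))]
    -- continuity
    have hcont : ContinuousOn ς s₁ := by
      intro x' hx'
      rw [ContinuousWithinAt, tendsto_iff_dist_tendsto_zero]
      apply squeeze_zero' (Filter.Eventually.of_forall fun x => dist_nonneg)
      · filter_upwards [self_mem_nhdsWithin] with x hx
        exact hest x' hx' x hx
      · have htend : Filter.Tendsto (fun x => (x, ς x')) (nhdsWithin x' s₁)
            (nhdsWithin (x', ς x') (s₁ ×ˢ s₂)) := by
          apply tendsto_nhdsWithin_of_tendsto_nhds_of_eventually_within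
          · exact ((continuous_id.prodMk continuous_const).tendsto x').mono_left
              nhdsWithin_le_nhds
          · filter_upwards [self_mem_nhdsWithin] with x hx
            exact ⟨hx, hς1 x' hx'⟩
        have hGc : Filter.Tendsto (fun x => G x (ς x')) (nhdsWithin x' s₁)
            (nhds (G x' (ς x'))) :=
          Filter.Tendsto.comp (hGcont (x', ς x') ⟨hx', hς1 x' hx'⟩) htend
        have h0 : Filter.Tendsto (fun x => ‖G x (ς x') - G x' (ς x')‖)
            (nhdsWithin x' s₁) (nhds 0) := by
          have := (hGc.sub (tendsto_const_nhds (x := G x' (ς x')))).norm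
          simpa using this
        have := h0.const_mul ((3 / 2) * c)
        simpa [mul_assoc] using this
    exact ⟨ς, hcont, fun x hx => ⟨hς1 x hx, hς2 x hx, huniq x hx⟩⟩
end
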